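/- arXiv:2304.04645 — 2 statements merged into one kernel-verified Lean document; each statement's English description precedes it below -/
import Mathlib

section
/- Let X be a topological space with H²(X;ℚ) = 0 and suppose the even-degree rational cohomology ring H^{even}(X × S¹;ℚ) is generated as a ring by H⁰(X × S¹;ℚ) ⊕ H²(X × S¹;ℚ). Then H^k(X;ℚ) = 0 for all k ≥ 2. -/
/-- Let `A = H*(X;ℚ)` and `B = H*(X×S¹;ℚ)` be graded `ℚ`-algebras related by
the Künneth isomorphism: `π₁ : A → B` degree-preserving injective, `t ∈ B` of degree 1 the
pullback of the fundamental class of `S¹` with `t² = 0` and graded commutation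
`t·π₁(a) = (−1)^n π₁(a)·t` for `a` of degree `n`, such that every class of `B` in degree `n`
is uniquely `π₁(x) + π₁(y)·t` with `deg x = n`, `deg y = n−1`.  If `H²(X;ℚ) = 0` and the even
part of `B` is generated as a ring by its degree-0 and degree-2 parts, then `H^k(X;ℚ) = 0`
for all `k ≥ 2`. -/
theorem stmt9 {A B : Type*} [Ring A] [Algebra ℚ A] [Ring B] [Algebra ℚ B]
    (𝒜 : ℕ → Submodule ℚ A) [GradedAlgebra 𝒜]
    (ℬ : ℕ → Submodule ℚ B) [GradedAlgebra ℬ]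
    (π₁ : A →ₐ[ℚ] B) (hπinj : Function.Injective π₁)
    (hπdeg : ∀ n, ∀ a ∈ 𝒜 n, π₁ a ∈ ℬ n)
    (t : B) (ht : t ∈ ℬ 1) (ht2 : t * t = 0)
    (hcomm : ∀ n, ∀ a ∈ 𝒜 n, t * π₁ a = ((-1 : ℚ) ^ n) • (π₁ a * t))
    (hKun0 : ∀ b ∈ ℬ 0, ∃ x ∈ 𝒜 0, b = π₁ x)
    (hKun : ∀ n : ℕ, ∀ b ∈ ℬ (n + 1), ∃ x ∈ 𝒜 (n + 1), ∃ y ∈ 𝒜 n, b = π₁ x + π₁ y * t)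
    (huniq : ∀ n : ℕ, ∀ x ∈ 𝒜 (n + 1), ∀ y ∈ 𝒜 n, π₁ x + π₁ y * t = 0 → x = 0 ∧ y = 0)
    (h2 : 𝒜 2 = ⊥)
    (hgen : ∀ k : ℕ, (ℬ (2 * k) : Set B) ⊆
      (Algebra.adjoin ℚ ((ℬ 0 : Set B) ∪ (ℬ 2 : Set B)) : Subalgebra ℚ B)) :
    ∀ k ≥ 2, 𝒜 k = ⊥ := by
  -- Every element of ℬ 2 has the form π₁ y * t with y ∈ 𝒜 1.
  have hB2 : ∀ u ∈ ℬ 2, ∃ y ∈ 𝒜 1, u = π₁ y * t := by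
    intro u hu
    obtain ⟨x, hx, y, hy, rfl⟩ := hKun 1 u hu
    rw [h2, Submodule.mem_bot] at hx
    exact ⟨y, hy, by simp [hx]⟩
  -- Products of two elements of ℬ 2 vanish.
  have hB2mul : ∀ u ∈ ℬ 2, ∀ v ∈ ℬ 2, u * v = 0 := by
    intro u hu v hv
    obtain ⟨y, hy, rfl⟩ := hB2 u hu
    obtain ⟨y', hy', rfl⟩ := hB2 v hv
    have h0 : t * (π₁ y' * t) = 0 := by
      rw [← mul_assoc, hcomm 1 y' hy']
      simp [mul_assoc, ht2]
    calc π₁ y * t * (π₁ y' * t) = π₁ y * (t * (π₁ y' * t)) := by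
          rw [mul_assoc]
      _ = 0 := by rw [h0, mul_zero]
  -- ℬ 0 ⊔ ℬ 2 is a subalgebra.
  have hone : (1 : B) ∈ ℬ 0 := SetLike.one_mem_graded ℬ
  have hmulM : ∀ x ∈ (ℬ 0 ⊔ ℬ 2 : Submodule ℚ B), ∀ y ∈ (ℬ 0 ⊔ ℬ 2 : Submodule ℚ B),
      x * y ∈ (ℬ 0 ⊔ ℬ 2 : Submodule ℚ B) := by
    intro x hx y hy
    obtain ⟨x0, hx0, x2, hx2, rfl⟩ := Submodule.mem_sup.mp hx
    obtain ⟨y0, hy0, y2, hy2, rfl⟩ := Submodule.mem_sup.mp hy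
    have e : (x0 + x2) * (y0 + y2) = x0 * y0 + (x0 * y2 + x2 * y0) + x2 * y2 := by
      rw [add_mul, mul_add, mul_add]; abel
    rw [e, hB2mul x2 hx2 y2 hy2, add_zero]
    refine add_mem ?_ (add_mem ?_ ?_)
    · exact Submodule.mem_sup_left (SetLike.mul_mem_graded hx0 hy0)
    · exact Submodule.mem_sup_right (SetLike.mul_mem_graded hx0 hy2)
    · exact Submodule.mem_sup_right (by
        have := SetLike.mul_mem_graded hx2 hy0
        simpa using this)
  -- the adjoin is contained in ℬ 0 ⊔ ℬ 2
  have hadj : (Algebra.adjoin ℚ ((ℬ 0 : Set B) ∪ (ℬ 2 : Set B)) : Subalgebra ℚ B) ≤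
      Submodule.toSubalgebra (ℬ 0 ⊔ ℬ 2) (Submodule.mem_sup_left hone) (fun x y hx hy => hmulM x hx y hy) := by
    apply Algebra.adjoin_le
    rintro b (hb | hb)
    · exact Submodule.mem_sup_left hb
    · exact Submodule.mem_sup_right hb
  -- homogeneous elements of degree ∉ {0,2} lying in ℬ0 ⊔ ℬ2 are zero
  have hzero : ∀ m : ℕ, m ≠ 0 → m ≠ 2 → ∀ b ∈ ℬ m,
      b ∈ (ℬ 0 ⊔ ℬ 2 : Submodule ℚ B) → b = 0 := by
    intro m hm0 hm2 b hb hbM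
    obtain ⟨b0, hb0, b2, hb2, rfl⟩ := Submodule.mem_sup.mp hbM
    have e1 : ((DirectSum.decompose ℬ (b0 + b2)) m : B) = b0 + b2 :=
      DirectSum.decompose_of_mem_same ℬ hb
    have e2 : ((DirectSum.decompose ℬ b0) m : B) = 0 :=
      DirectSum.decompose_of_mem_ne ℬ hb0 (fun h => hm0 h.symm)
    have e3 : ((DirectSum.decompose ℬ b2) m : B) = 0 :=
      DirectSum.decompose_of_mem_ne ℬ hb2 (fun h => hm2 h.symm)
    rw [DirectSum.decompose_add, DirectSum.add_apply, Submodule.coe_add, e2, e3, add_zero] at e1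
    exact e1.symm
  -- high even parts of B vanish
  have hBzero : ∀ j : ℕ, 2 ≤ j → ∀ b ∈ ℬ (2 * j), b = 0 := by
    intro j hj b hb
    have hmem : b ∈ (ℬ 0 ⊔ ℬ 2 : Submodule ℚ B) := hadj (hgen j hb)
    exact hzero (2 * j) (by omega) (by omega) b hb hmem
  intro k hk
  rw [Submodule.eq_bot_iff]
  intro a ha
  rcases Nat.even_or_odd k with ⟨j, hj⟩ | ⟨j, hj⟩
  · -- k = j + j even
    subst hj
    by_cases hj2 : j = 1
    · subst hj2
      have : a ∈ 𝒜 2 := ha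
      rw [h2, Submodule.mem_bot] at this
      exact this
    · have hj' : 2 ≤ j := by omega
      have hb : π₁ a ∈ ℬ (2 * j) := by
        have := hπdeg (j + j) a ha
        simpa [two_mul] using this
      have : π₁ a = 0 := hBzero j hj' _ hb
      have := hπinj (by simpa using this : π₁ a = π₁ 0)
      exact this
  · -- k = 2 * j + 1 odd, j ≥ 1
    subst hj
    have hj1 : 1 ≤ j := by omega
    have hb : π₁ a * t ∈ ℬ (2 * (j + 1)) := by
      have h1 := SetLike.mul_mem_graded (hπdeg (2 * j + 1) a ha) ht
      have h' : 2 * j + 1 + 1 = 2 * (j + 1) := by ring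
      rw [h'] at h1
      exact h1
    have h0 : π₁ a * t = 0 := hBzero (j + 1) (by omega) _ hb
    have := huniq (2 * j + 1) 0 (zero_mem _) a ha (by simpa using h0)
    exact this.2
end

section
/- Let F be a finite subset of Γ = π₁(M,p) for a compact connected Riemannian manifold M, with fixed piecewise smooth representing loops γ_s. Suppose for all s,t ∈ F we are given homotopies from γ_t * γ_s to γ_{st} of area at most C. Then for any hermitian vector bundle E with unitary connection ∇ and parallel transport P, the map ρ(s) = P_{γ_s} satisfies ‖ρ(st) − ρ(s)ρ(t)‖ ≤ C ‖R^∇‖ for all s, t ∈ F. -/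
/-- Let `F` be a finite subset of `Γ = π₁(M,p)` with fixed representing
loops `γ_s`, and suppose every pair `s,t ∈ F` admits a homotopy (rel endpoints) from
`γ_t * γ_s` to `γ_{st}` of area at most `C`.  For parallel transport `P` of a unitary
connection `∇` with curvature norm `RR = ‖R^∇‖` (satisfying the Buser–Karcher estimate
`‖P_{f₀} − P_{f₁}‖ ≤ ‖R^∇‖ · area` and `P_{f.trans g} = P_g ∘ P_f`), the map
`ρ(s) = P_{γ_s}` satisfies `‖ρ(st) − ρ(s)ρ(t)‖ ≤ C‖R^∇‖` for all `s,t ∈ F`. -/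
theorem stmt13 {Γ A M : Type*} [Group Γ] [NormedRing A] [TopologicalSpace M] (p : M)
    (F : Finset Γ) (γ : Γ → Path p p)
    (P : Path p p → A)
    (Pmul : ∀ f g : Path p p, P (f.trans g) = P g * P f)
    (RR C : ℝ) (hRR : 0 ≤ RR) (hC : 0 ≤ C)
    (Ar : Path p p → Path p p → ℝ)
    (hBK : ∀ f₀ f₁ : Path p p, Path.Homotopic f₀ f₁ → ‖P f₀ - P f₁‖ ≤ RR * Ar f₀ f₁)
    (harea : ∀ s ∈ F, ∀ t ∈ F,
      Path.Homotopic ((γ t).trans (γ s)) (γ (s * t)) ∧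
      Ar ((γ t).trans (γ s)) (γ (s * t)) ≤ C) :
    ∀ s ∈ F, ∀ t ∈ F, ‖P (γ (s * t)) - P (γ s) * P (γ t)‖ ≤ C * RR := by
  intro s hs t ht
  obtain ⟨hhom, har⟩ := harea s hs t ht
  have h := hBK _ _ hhom
  rw [Pmul] at h
  calc ‖P (γ (s * t)) - P (γ s) * P (γ t)‖
      = ‖P (γ s) * P (γ t) - P (γ (s * t))‖ := by rw [norm_sub_rev]
    _ ≤ RR * Ar ((γ t).trans (γ s)) (γ (s * t)) := h
    _ ≤ RR * C := by exact mul_le_mul_of_nonneg_left har hRR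
    _ = C * RR := mul_comm _ _
end
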